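/- Let R be a commutative ring and let A = (a_{ij}), B = (b_{ij}), C = (c_{ij}) be infinite matrices with entries in R satisfying ∑_{j=0}^n a_{ij} b_{ℓ,n-j} = c_{i+ℓ,n} for all i, ℓ, n ≥ 0, with a_{00} and b_{00} invertible in R. If A and B are lower-triangular in row 0, and in addition at least one of A, B, C is lower-triangular in row 1, then there exist α, β, κ, λ ∈ R with α and β invertible such that a_{ij} = α κ^{i−j} λ^j C(i,j), b_{ij} = β κ^{i−j} λ^j C(i,j), and c_{ij} = αβ κ^{i−j} λ^j C(i,j) for all i ≥ j ≥ 0, and a_{ij} = b_{ij} = c_{ij} = 0 for j > i. -/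

import Mathlib

noncomputable section

open PowerSeries

/-- The `i`-th row-generating series `Mᵢ(u) = ∑_j m_{ij} uʲ ∈ R[[u]]` of an
infinite matrix `M = (m_{ij})_{i,j ≥ 0}` with entries in `R`. -/
def rowGen {R : Type*} [CommRing R] (m : ℕ → ℕ → R) (i : ℕ) : PowerSeries R :=
  PowerSeries.mk (m i)
theorem coeff_pascal_pow {R : Type*} [CommRing R] (κ lam : R) (i j : ℕ) :
    (PowerSeries.coeff j) ((C κ + C lam * X) ^ i)
      = if j ≤ i then κ ^ (i - j) * lam ^ j * (i.choose j : R) else 0 := by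
  rw [add_comm, add_pow, map_sum]
  have hterm : ∀ m ∈ Finset.range (i + 1),
      (PowerSeries.coeff j) ((C lam * X) ^ m * (C κ) ^ (i - m) * (i.choose m : R⟦X⟧))
        = if m = j then κ ^ (i - j) * lam ^ j * (i.choose j : R) else 0 := by
    intro m _
    have : (C lam * X) ^ m * (C κ) ^ (i - m) * ((i.choose m : ℕ) : R⟦X⟧)
        = C (lam ^ m * κ ^ (i - m) * (i.choose m : R)) * X ^ m := by
      rw [mul_pow, ← map_pow, ← map_pow, ← map_natCast (C (R := R)), map_mul, map_mul]
      ring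
    rw [this, PowerSeries.coeff_C_mul, PowerSeries.coeff_X_pow]
    split_ifs with h h2 h2
    · subst h2; ring
    · exact absurd h.symm h2
    · exact absurd h2.symm h
    · simp
  rw [Finset.sum_congr rfl hterm, Finset.sum_ite_eq' (Finset.range (i+1)) j]
  simp [Nat.lt_succ_iff]

/-- Let `R` be a commutative ring and `A, B, C` infinite
matrices over `R` satisfying `∑_{j=0}^n a_{ij} b_{ℓ,n-j} = c_{i+ℓ,n}` for all
`i, ℓ, n ≥ 0`, with `a₀₀`, `b₀₀` invertible.  If `A` and `B` are
lower-triangular in row `0`, and at least one of `A, B, C` is lower-triangular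
in row `1`, then there exist `α, β, κ, λ ∈ R` with `α, β` invertible such that
`a_{ij} = α κ^{i-j} λ^j C(i,j)`, `b_{ij} = β κ^{i-j} λ^j C(i,j)` and
`c_{ij} = αβ κ^{i-j} λ^j C(i,j)` for all `i ≥ j ≥ 0`, and
`a_{ij} = b_{ij} = c_{ij} = 0` for `j > i`. -/
theorem pascal_like_triangular_classification {R : Type*} [CommRing R]
    (a b c : ℕ → ℕ → R)
    (hconv : ∀ i l n, ∑ j ∈ Finset.range (n + 1), a i j * b l (n - j) = c (i + l) n)
    (ha00 : IsUnit (a 0 0)) (hb00 : IsUnit (b 0 0))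
    (haRow0 : ∀ j, 0 < j → a 0 j = 0) (hbRow0 : ∀ j, 0 < j → b 0 j = 0)
    (hRow1 : (∀ j, 1 < j → a 1 j = 0) ∨ (∀ j, 1 < j → b 1 j = 0) ∨
      (∀ j, 1 < j → c 1 j = 0)) :
    ∃ α β κ lam : R,
      IsUnit α ∧ IsUnit β ∧
      (∀ i j, j ≤ i →
        a i j = α * κ ^ (i - j) * lam ^ j * (i.choose j : R) ∧
        b i j = β * κ ^ (i - j) * lam ^ j * (i.choose j : R) ∧
        c i j = α * β * κ ^ (i - j) * lam ^ j * (i.choose j : R)) ∧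
      (∀ i j, i < j → a i j = 0 ∧ b i j = 0 ∧ c i j = 0) := by
  obtain ⟨a', ha'⟩ := ha00.exists_right_inv
  obtain ⟨b', hb'⟩ := hb00.exists_right_inv
  -- c i n = a i n * b 0 0
  have h1 : ∀ i n, c i n = a i n * b 0 0 := by
    intro i n
    have key := hconv i 0 n
    rw [Finset.sum_eq_single n (fun k hk hkn => by
        rw [hbRow0 (n - k) (Nat.sub_pos_of_lt (lt_of_le_of_ne
          (Nat.lt_succ_iff.mp (Finset.mem_range.mp hk)) hkn)), mul_zero])
      (fun h => absurd (Finset.self_mem_range_succ n) h)] at key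
    simpa using key.symm
  -- c l n = a 0 0 * b l n
  have h2 : ∀ l n, c l n = a 0 0 * b l n := by
    intro l n
    have key := hconv 0 l n
    rw [Finset.sum_eq_single 0 (fun k hk hkn => by rw [haRow0 k (Nat.pos_of_ne_zero hkn), zero_mul])
      (fun h => absurd (Finset.mem_range.mpr (Nat.succ_pos n)) h)] at key
    simpa using key.symm
  have hb_eq : ∀ l n, b l n = a' * (a l n * b 0 0) := by
    intro l n
    have := (h2 l n).symm.trans (h1 l n)
    linear_combination a' * this - (b l n) * ha'
  -- key quadratic relation for a
  have hS : ∀ i l n, ∑ j ∈ Finset.range (n + 1), a i j * a l (n - j)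
      = a 0 0 * a (i + l) n := by
    intro i l n
    have key := hconv i l n
    rw [h1] at key
    have key2 : (a' * b 0 0) * ∑ j ∈ Finset.range (n + 1), a i j * a l (n - j)
        = a (i + l) n * b 0 0 := by
      rw [← key, Finset.mul_sum]
      exact Finset.sum_congr rfl fun j _ => by linear_combination (-(a i j)) * hb_eq l (n - j)
    set S := ∑ j ∈ Finset.range (n + 1), a i j * a l (n - j)
    linear_combination (a 0 0 * b') * key2 - S * ha'
      + (a 0 0 * a (i + l) n - S * a 0 0 * a') * hb'
  -- power series version
  have hAA : ∀ i l, rowGen a i * rowGen a l = C (a 0 0) * rowGen a (i + l) := by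
    intro i l
    ext n
    rw [PowerSeries.coeff_mul, PowerSeries.coeff_C_mul,
      Finset.Nat.sum_antidiagonal_eq_sum_range_succ_mk]
    simp only [rowGen, coeff_mk]
    rw [hS i l n]
  set D : ℕ → R⟦X⟧ := fun i => C a' * rowGen a i with hDdef
  have hDmul : ∀ i l, D i * D l = D (i + l) := by
    intro i l
    have : D i * D l = C (a' * a') * (rowGen a i * rowGen a l) := by
      rw [hDdef]; simp only [map_mul]; ring
    rw [this, hAA, ← mul_assoc, ← map_mul,
      show a' * a' * a 0 0 = a' from by linear_combination a' * ha']
  have hD0 : D 0 = 1 := by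
    ext n
    rw [hDdef]
    simp only [PowerSeries.coeff_C_mul, rowGen, coeff_mk, PowerSeries.coeff_one]
    cases n with
    | zero => rw [if_pos rfl]; linear_combination ha'
    | succ n => rw [haRow0 (n + 1) (Nat.succ_pos n), mul_zero]; simp
  have hDpow : ∀ i, D i = D 1 ^ i := by
    intro i
    induction i with
    | zero => simpa using hD0
    | succ i ih => rw [← hDmul i 1, ih, pow_succ]
  -- row 1 of a is lower triangular
  have harow1 : ∀ j, 1 < j → a 1 j = 0 := by
    rcases hRow1 with h | h | h
    · exact h
    · intro j hj
      have e1 : a 0 0 * b 1 j = a 1 j * b 0 0 := (h2 1 j).symm.trans (h1 1 j)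
      rw [h j hj, mul_zero] at e1
      linear_combination (-b' : R) * e1 - a 1 j * hb'
    · intro j hj
      have e1 := h1 1 j
      rw [h j hj] at e1
      linear_combination (-b' : R) * e1 - a 1 j * hb'
  set κ := a' * a 1 0 with hκ
  set lam := a' * a 1 1 with hlam
  have hD1 : D 1 = C κ + C lam * X := by
    ext n
    rw [hDdef]
    simp only [PowerSeries.coeff_C_mul, rowGen, coeff_mk, map_add, PowerSeries.coeff_C]
    match n with
    | 0 => simp [hκ]
    | 1 => simp [hlam]
    | (n+2) =>
      rw [harow1 (n+2) (by omega), mul_zero]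
      simp [PowerSeries.coeff_X]
  have haEq : ∀ i n, a i n
      = a 0 0 * (if n ≤ i then κ ^ (i - n) * lam ^ n * (i.choose n : R) else 0) := by
    intro i n
    have hA : rowGen a i = C (a 0 0) * D i := by
      rw [hDdef, ← mul_assoc, ← map_mul, ha', map_one, one_mul]
    have := congrArg (PowerSeries.coeff n) hA
    rw [PowerSeries.coeff_C_mul, hDpow, hD1, coeff_pascal_pow] at this
    simpa [rowGen] using this
  refine ⟨a 0 0, b 0 0, κ, lam, ha00, hb00, ?_, ?_⟩
  · intro i j hij
    refine ⟨?_, ?_, ?_⟩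
    · rw [haEq, if_pos hij]; ring
    · rw [hb_eq, haEq, if_pos hij]
      linear_combination (b 0 0 * (κ ^ (i - j) * lam ^ j * (i.choose j : R))) * ha'
    · rw [h1, haEq, if_pos hij]; ring
  · intro i j hij
    have ha0 : a i j = 0 := by rw [haEq, if_neg (by omega), mul_zero]
    refine ⟨ha0, ?_, ?_⟩
    · rw [hb_eq, ha0, zero_mul, mul_zero]
    · rw [h1, ha0, zero_mul]
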